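/- For every ρ₊ > 0 there exists a constant c > 0 such that Z(e·φ) ≤ Z(φ) · e^{c·R(φ)} for every φ ≥ 0 with R(φ) ≤ ρ₊. Consequently, if X₁, …, Xₙ are independent random variables each with distribution ν_φ and R(φ) = ρ ≤ ρ₊, then for all t ≥ 0, P[Σ_{k=1}^n X_k ≥ cρn + t] ≤ e^{−t}. -/

import Mathlib

open MeasureTheory ProbabilityTheory

/-- The "generalized factorial" `g(k)! = g(k) ⋯ g(1)`, with `g(0)! = 1`. -/
noncomputable def gFact (g : ℕ → ℝ) : ℕ → ℝ
  | 0 => 1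
  | n + 1 => g (n + 1) * gFact g n

/-- The partition function `Z(φ) = Σ_{k=0}^∞ φ^k / g(k)!`. -/
noncomputable def Zfun (g : ℕ → ℝ) (φ : ℝ) : ℝ := ∑' k : ℕ, φ ^ k / gFact g k

/-- The measure `ν_φ` on `ℕ`, given by `ν_φ(k) = φ^k / (g(k)!·Z(φ))`.
For `φ = 0` this is the Dirac mass at `0`. -/
noncomputable def nuMeasure (g : ℕ → ℝ) (φ : ℝ) : Measure ℕ :=
  Measure.sum fun k =>
    (ENNReal.ofReal (φ ^ k / (gFact g k * Zfun g φ))) • Measure.dirac k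

/-- The mean `R(φ) = (1/Z(φ)) Σ_{k=0}^∞ k φ^k / g(k)!` of `ν_φ`. -/
noncomputable def Rfun (g : ℕ → ℝ) (φ : ℝ) : ℝ :=
  (∑' k : ℕ, (k : ℝ) * φ ^ k / gFact g k) / Zfun g φ

lemma real_exp_tsum (y : ℝ) : Real.exp y = ∑' n : ℕ, y ^ n / n.factorial := by
  rw [Real.exp_eq_exp_ℝ, NormedSpace.exp_eq_tsum_div]

section helpers
variable {g : ℕ → ℝ} {Γm Γp : ℝ}
variable (hΓm : 0 < Γm) (hg0 : g 0 = 0)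
  (hg : ∀ k : ℕ, 1 ≤ k → Γm ≤ g k - g (k - 1) ∧ g k - g (k - 1) ≤ Γp)

include hΓm hg0 hg

lemma g_lb : ∀ k : ℕ, Γm * k ≤ g k := by
  intro k
  induction k with
  | zero => simp [hg0]
  | succ n ih =>
    have h := (hg (n + 1) (by omega)).1
    simp only [Nat.add_sub_cancel] at h
    push_cast; nlinarith

omit hΓm in
lemma g_ub : ∀ k : ℕ, g k ≤ Γp * k := by
  intro k
  induction k with
  | zero => simp [hg0]
  | succ n ih =>
    have h := (hg (n + 1) (by omega)).2
    simp only [Nat.add_sub_cancel] at h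
    push_cast; nlinarith

lemma gFact_lb : ∀ k : ℕ, Γm ^ k * k.factorial ≤ gFact g k := by
  intro k
  induction k with
  | zero => simp [gFact]
  | succ n ih =>
    have h1 : Γm * (n + 1 : ℕ) ≤ g (n + 1) := g_lb hΓm hg0 hg (n + 1)
    have h2 : (0:ℝ) < Γm ^ n * n.factorial := by positivity
    have h3 : (0:ℝ) ≤ Γm * (n+1:ℕ) := by positivity
    calc Γm ^ (n+1) * (n+1).factorial
        = (Γm * (n+1:ℕ)) * (Γm ^ n * n.factorial) := by
          rw [Nat.factorial_succ]; push_cast; ring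
      _ ≤ g (n + 1) * gFact g n := mul_le_mul h1 ih h2.le (le_trans h3 h1)
      _ = gFact g (n + 1) := rfl

lemma gFact_pos (k : ℕ) : 0 < gFact g k :=
  lt_of_lt_of_le (by positivity) (gFact_lb hΓm hg0 hg k)

lemma term_le {φ : ℝ} (hφ : 0 ≤ φ) (k : ℕ) :
    φ ^ k / gFact g k ≤ (φ / Γm) ^ k / k.factorial := by
  have h1 := gFact_lb hΓm hg0 hg k
  have h2 : (0:ℝ) < Γm ^ k * k.factorial := by positivity
  rw [div_pow, div_div]
  exact div_le_div_of_nonneg_left (by positivity) h2 h1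

lemma term_nonneg {φ : ℝ} (hφ : 0 ≤ φ) (k : ℕ) : 0 ≤ φ ^ k / gFact g k :=
  div_nonneg (by positivity) (gFact_pos hΓm hg0 hg k).le

lemma summable_Z {φ : ℝ} (hφ : 0 ≤ φ) :
    Summable (fun k : ℕ => φ ^ k / gFact g k) :=
  Summable.of_nonneg_of_le (term_nonneg hΓm hg0 hg hφ) (term_le hΓm hg0 hg hφ)
    (Real.summable_pow_div_factorial _)

lemma summable_kZ {φ : ℝ} (hφ : 0 ≤ φ) :
    Summable (fun k : ℕ => (k : ℝ) * φ ^ k / gFact g k) := by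
  apply Summable.of_nonneg_of_le (fun k => ?_) (fun k => ?_)
    (Real.summable_pow_div_factorial (2 * φ / Γm))
  · have := (gFact_pos hΓm hg0 hg k).le; positivity
  · have hk : (k : ℝ) ≤ 2 ^ k := by exact_mod_cast (Nat.lt_two_pow_self (n := k)).le
    calc (k : ℝ) * φ ^ k / gFact g k ≤ 2 ^ k * φ ^ k / gFact g k := by
          gcongr; exact (gFact_pos hΓm hg0 hg k).le
      _ = (2 * φ) ^ k / gFact g k := by rw [mul_pow]
      _ ≤ (2 * φ / Γm) ^ k / k.factorial := term_le hΓm hg0 hg (by positivity) k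

lemma Z_ge_one {φ : ℝ} (hφ : 0 ≤ φ) : 1 ≤ Zfun g φ := by
  have h := Summable.le_tsum (summable_Z hΓm hg0 hg hφ) 0
    (fun j _ => term_nonneg hΓm hg0 hg hφ j)
  simpa [gFact, Zfun] using h

lemma Z_pos {φ : ℝ} (hφ : 0 ≤ φ) : 0 < Zfun g φ :=
  lt_of_lt_of_le one_pos (Z_ge_one hΓm hg0 hg hφ)

lemma kterm_nonneg {φ : ℝ} (hφ : 0 ≤ φ) (k : ℕ) : 0 ≤ (k:ℝ) * φ ^ k / gFact g k := by
  have := (gFact_pos hΓm hg0 hg k).le; positivity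

lemma R_nonneg {φ : ℝ} (hφ : 0 ≤ φ) : 0 ≤ Rfun g φ :=
  div_nonneg (tsum_nonneg (kterm_nonneg hΓm hg0 hg hφ)) (Z_pos hΓm hg0 hg hφ).le

lemma num_eq {φ : ℝ} (hφ : 0 ≤ φ) :
    Rfun g φ * Zfun g φ = ∑' k : ℕ, (k:ℝ) * φ ^ k / gFact g k := by
  rw [Rfun, div_mul_cancel₀ _ (Z_pos hΓm hg0 hg hφ).ne']

lemma phi_le (hΓp : 1 ≤ Γp) {φ : ℝ} (hφ : 0 ≤ φ) : φ ≤ Γp * Rfun g φ := by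
  have hZ := Z_pos hΓm hg0 hg hφ
  have hnum := summable_kZ hΓm hg0 hg hφ
  have hshift : Summable (fun k : ℕ => ((k+1:ℕ):ℝ) * φ ^ (k+1) / gFact g (k+1)) :=
    (summable_nat_add_iff (f := fun k : ℕ => (k:ℝ) * φ ^ k / gFact g k) 1).mpr hnum
  have h1 : (∑' k : ℕ, (k:ℝ) * φ ^ k / gFact g k)
      = ∑' k : ℕ, ((k+1:ℕ):ℝ) * φ ^ (k+1) / gFact g (k+1) := by
    rw [Summable.tsum_eq_zero_add hnum]
    norm_num
  have h2 : φ * Zfun g φ = ∑' k : ℕ, φ ^ (k+1) / gFact g k := by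
    rw [Zfun, ← tsum_mul_left]
    congr 1; funext k; rw [pow_succ]; ring
  have h3 : ∀ k : ℕ, φ ^ (k+1) / gFact g k
      ≤ Γp * (((k+1:ℕ):ℝ) * φ ^ (k+1) / gFact g (k+1)) := by
    intro k
    have hgk1 : 0 < g (k+1) := by
      have := g_lb hΓm hg0 hg (k+1); push_cast at this; nlinarith
    have hgF : 0 < gFact g k := gFact_pos hΓm hg0 hg k
    have hub : g (k+1) ≤ Γp * (k+1:ℕ) := g_ub hg0 hg (k+1)
    have : gFact g (k+1) = g (k+1) * gFact g k := rfl
    have hφk : (0:ℝ) ≤ φ ^ (k+1) := by positivity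
    have key : Γp * (((k+1:ℕ):ℝ) * φ ^ (k+1) / gFact g (k+1))
        = (Γp * ((k+1:ℕ):ℝ) / g (k+1)) * (φ ^ (k+1) / gFact g k) := by
      rw [this]; field_simp
    have hcoef : 1 ≤ Γp * ((k+1:ℕ):ℝ) / g (k+1) := (one_le_div hgk1).mpr hub
    rw [key]
    nlinarith [mul_le_mul_of_nonneg_right hcoef (div_nonneg hφk hgF.le)]
  have h4 : φ * Zfun g φ ≤ Γp * (Rfun g φ * Zfun g φ) := by
    rw [h2, num_eq hΓm hg0 hg hφ, h1, ← tsum_mul_left]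
    exact Summable.tsum_le_tsum h3
      (((summable_Z hΓm hg0 hg hφ).mul_left φ).congr
        (fun k => by rw [pow_succ]; ring)) (hshift.mul_left Γp)
  calc φ = φ * Zfun g φ / Zfun g φ := by field_simp
    _ ≤ Γp * (Rfun g φ * Zfun g φ) / Zfun g φ := by gcongr
    _ = Γp * Rfun g φ := by field_simp

lemma Zexp_le (hΓp : 1 ≤ Γp) {φ ρp : ℝ} (hφ : 0 ≤ φ) (hR : Rfun g φ ≤ ρp) :
    Zfun g (Real.exp 1 * φ) ≤ Zfun g φ *
      Real.exp ((Real.exp 1 * Γp / Γm) * Real.exp (Real.exp 1 * Γp * ρp / Γm)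
        * Rfun g φ) := by
  set e := Real.exp 1 with he
  have he1 : 1 ≤ e := by rw [he]; nlinarith [Real.add_one_le_exp 1]
  have he0 : 0 < e := lt_of_lt_of_le one_pos he1
  have heφ : 0 ≤ e * φ := by positivity
  have hsφ := summable_Z hΓm hg0 hg hφ
  have hse := summable_Z hΓm hg0 hg heφ
  set c := (e * Γp / Γm) * Real.exp (e * Γp * ρp / Γm) with hc
  have hR0 : 0 ≤ Rfun g φ := R_nonneg hΓm hg0 hg hφ
  have hc0 : 0 < c := by positivity
  set y := e * φ / Γm with hy
  have hy0 : 0 ≤ y := by positivity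
  have hD : Summable (fun k : ℕ => ((e*φ) ^ k - φ ^ k) / gFact g k) :=
    (hse.sub hsφ).congr (fun k => (sub_div _ _ _).symm)
  have hsplit : Zfun g (e * φ) = Zfun g φ + ∑' k : ℕ, ((e*φ) ^ k - φ ^ k) / gFact g k := by
    rw [Zfun, Zfun, ← Summable.tsum_add hsφ hD]
    congr 1; funext k; rw [← add_div]; ring_nf
  have hyexp : Summable (fun k : ℕ => y * (y ^ k / k.factorial)) :=
    (Real.summable_pow_div_factorial y).mul_left y
  have hshiftD : Summable (fun k : ℕ => ((e*φ) ^ (k+1) - φ ^ (k+1)) / gFact g (k+1)) :=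
    (summable_nat_add_iff (f := fun k : ℕ => ((e*φ) ^ k - φ ^ k) / gFact g k) 1).mpr hD
  have hbound : (∑' k : ℕ, ((e*φ) ^ k - φ ^ k) / gFact g k) ≤ y * Real.exp y := by
    rw [Summable.tsum_eq_zero_add hD]
    have h0 : ((e*φ) ^ 0 - φ ^ 0) / gFact g 0 = 0 := by simp
    rw [h0, zero_add]
    calc (∑' k : ℕ, ((e*φ) ^ (k+1) - φ ^ (k+1)) / gFact g (k+1))
        ≤ ∑' k : ℕ, y * (y ^ k / k.factorial) := by
          apply Summable.tsum_le_tsum _ hshiftD hyexp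
          intro k
          have hgF := gFact_pos hΓm hg0 hg (k+1)
          have step1 : ((e*φ) ^ (k+1) - φ ^ (k+1)) / gFact g (k+1)
              ≤ (e*φ) ^ (k+1) / gFact g (k+1) := by
            exact div_le_div_of_nonneg_right
              (by nlinarith [pow_nonneg hφ (k+1)]) hgF.le
          have step2 : (e*φ) ^ (k+1) / gFact g (k+1) ≤ y ^ (k+1) / (k+1).factorial := by
            rw [hy, div_pow]
            have := term_le hΓm hg0 hg heφ (k+1)
            rwa [div_pow] at this
          have step3 : y ^ (k+1) / (k+1).factorial ≤ y * (y ^ k / k.factorial) := by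
            rw [pow_succ, Nat.factorial_succ]
            rw [mul_comm (y ^ k) y, mul_div_assoc]
            apply mul_le_mul_of_nonneg_left _ hy0
            apply div_le_div_of_nonneg_left (by positivity) (by positivity)
            exact_mod_cast Nat.le_mul_of_pos_left _ k.succ_pos
          exact step1.trans (step2.trans step3)
      _ = y * Real.exp y := by rw [tsum_mul_left, real_exp_tsum]
  have hyR : y ≤ (e * Γp / Γm) * Rfun g φ := by
    have := phi_le hΓm hg0 hg hΓp hφ
    rw [hy]
    rw [div_le_iff₀ (by positivity) ]
    calc e * φ ≤ e * (Γp * Rfun g φ) := by nlinarith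
      _ = e * Γp / Γm * Rfun g φ * Γm := by field_simp
  have hfin : y * Real.exp y ≤ c * Rfun g φ := by
    have hyρ : y ≤ e * Γp * ρp / Γm := by
      apply hyR.trans
      have hΓp0 : (0:ℝ) < Γp := lt_of_lt_of_le one_pos hΓp
      rw [div_mul_eq_mul_div, div_le_div_iff₀ (by positivity) (by positivity)]
      nlinarith [mul_le_mul_of_nonneg_left hR (by positivity : (0:ℝ) ≤ e * Γp * Γm)]
    calc y * Real.exp y ≤ ((e * Γp / Γm) * Rfun g φ) * Real.exp (e * Γp * ρp / Γm) := by
          apply mul_le_mul hyR (Real.exp_le_exp.mpr hyρ) (Real.exp_pos y).le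
          positivity
      _ = c * Rfun g φ := by rw [hc]; ring
  calc Zfun g (e * φ) ≤ Zfun g φ + c * Rfun g φ := by
        rw [hsplit]; linarith [hbound.trans hfin]
    _ ≤ Zfun g φ * (1 + c * Rfun g φ) := by
        nlinarith [Z_ge_one hΓm hg0 hg hφ, mul_nonneg hc0.le hR0]
    _ ≤ Zfun g φ * Real.exp (c * Rfun g φ) := by
        have := Real.add_one_le_exp (c * Rfun g φ)
        nlinarith [Z_pos hΓm hg0 hg hφ]

omit hΓm hg0 hg in
lemma nu_singleton (φ : ℝ) (k : ℕ) :
    nuMeasure g φ {k} = ENNReal.ofReal (φ ^ k / (gFact g k * Zfun g φ)) := by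
  rw [nuMeasure, Measure.sum_apply _ (measurableSet_singleton k)]
  rw [tsum_eq_single k]
  · simp [Measure.smul_apply, Measure.dirac_apply' _ (measurableSet_singleton k)]
  · intro j hj
    simp [Measure.smul_apply, Measure.dirac_apply' _ (measurableSet_singleton k),
      Set.indicator_of_notMem (by simpa using hj : j ∉ ({k} : Set ℕ)), Pi.single_apply, hj]

lemma nu_integrable {φ : ℝ} (hφ : 0 ≤ φ) {f : ℕ → ℝ} (hf0 : ∀ k, 0 ≤ f k)
    (hs : Summable (fun k : ℕ => f k * (φ ^ k / (gFact g k * Zfun g φ)))) :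
    Integrable f (nuMeasure g φ) := by
  have hZ := Z_pos hΓm hg0 hg hφ
  have hw : ∀ k : ℕ, 0 ≤ φ ^ k / (gFact g k * Zfun g φ) := fun k => by
    have := (gFact_pos hΓm hg0 hg k).le; positivity
  refine ⟨measurable_from_top.aestronglyMeasurable, ?_⟩
  rw [hasFiniteIntegral_iff_ofReal (ae_of_all _ hf0), lintegral_countable']
  have : ∀ k : ℕ, ENNReal.ofReal (f k) * nuMeasure g φ {k}
      = ENNReal.ofReal (f k * (φ ^ k / (gFact g k * Zfun g φ))) := by
    intro k
    rw [nu_singleton, ← ENNReal.ofReal_mul (hf0 k)]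
  rw [tsum_congr this, ← ENNReal.ofReal_tsum_of_nonneg
    (fun k => mul_nonneg (hf0 k) (hw k)) hs]
  exact ENNReal.ofReal_lt_top

lemma nu_integral {φ : ℝ} (hφ : 0 ≤ φ) {f : ℕ → ℝ} (hf0 : ∀ k, 0 ≤ f k)
    (hs : Summable (fun k : ℕ => f k * (φ ^ k / (gFact g k * Zfun g φ)))) :
    ∫ k, f k ∂(nuMeasure g φ) = ∑' k : ℕ, f k * (φ ^ k / (gFact g k * Zfun g φ)) := by
  rw [integral_countable' (nu_integrable hΓm hg0 hg hφ hf0 hs)]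
  apply tsum_congr
  intro k
  rw [measureReal_def, nu_singleton, ENNReal.toReal_ofReal (by
    have := (gFact_pos hΓm hg0 hg k).le
    have := (Z_pos hΓm hg0 hg hφ).le
    positivity), smul_eq_mul, mul_comm]

lemma exp_summable {φ : ℝ} (hφ : 0 ≤ φ) :
    Summable (fun k : ℕ => Real.exp (1 * (k:ℝ)) * (φ ^ k / (gFact g k * Zfun g φ))) := by
  have h := (summable_Z hΓm hg0 hg (by positivity : (0:ℝ) ≤ Real.exp 1 * φ)).div_const
    (Zfun g φ)
  apply h.congr
  intro k
  rw [one_mul, ← Real.exp_one_pow, mul_pow]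
  ring

lemma exp_nu_integral {φ : ℝ} (hφ : 0 ≤ φ) :
    ∫ k, Real.exp (1 * (k:ℝ)) ∂(nuMeasure g φ)
      = Zfun g (Real.exp 1 * φ) / Zfun g φ := by
  rw [nu_integral hΓm hg0 hg hφ (fun k => (Real.exp_pos _).le)
    (exp_summable hΓm hg0 hg hφ)]
  have hZe : Zfun g (Real.exp 1 * φ) = ∑' k : ℕ, (Real.exp 1 * φ) ^ k / gFact g k := rfl
  rw [hZe, ← tsum_div_const]
  apply tsum_congr
  intro k
  rw [one_mul, ← Real.exp_one_pow, mul_pow]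
  ring

end helpers


/-- there is `c > 0` with `Z(e·φ) ≤ Z(φ)·e^{c·R(φ)}` whenever
`R(φ) ≤ ρ₊`; consequently, for `n` i.i.d. variables with law `ν_φ` and density
`ρ = R(φ) ≤ ρ₊`, `P[Σ X_k ≥ cρn + t] ≤ e^{−t}` for all `t ≥ 0`. -/
theorem zrp_large_deviation_constant
    (g : ℕ → ℝ) (Γm Γp : ℝ)
    (hΓm : 0 < Γm) (hΓm1 : Γm ≤ 1) (hΓp : 1 ≤ Γp)
    (hg0 : g 0 = 0)
    (hg : ∀ k : ℕ, 1 ≤ k → Γm ≤ g k - g (k - 1) ∧ g k - g (k - 1) ≤ Γp)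
    (ρp : ℝ) (hρp : 0 < ρp) :
    ∃ c : ℝ, 0 < c ∧
      (∀ φ : ℝ, 0 ≤ φ → Rfun g φ ≤ ρp →
        Zfun g (Real.exp 1 * φ) ≤ Zfun g φ * Real.exp (c * Rfun g φ)) ∧
      (∀ φ : ℝ, 0 ≤ φ → Rfun g φ ≤ ρp → ∀ n : ℕ,
        ∀ (Ω : Type) (_ : MeasurableSpace Ω) (P : Measure Ω), IsProbabilityMeasure P →
        ∀ X : Fin n → Ω → ℕ, (∀ i, Measurable (X i)) →
          iIndepFun X P →
          (∀ i, Measure.map (X i) P = nuMeasure g φ) →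
          ∀ t : ℝ, 0 ≤ t →
          P {ω | c * Rfun g φ * n + t ≤ ∑ i, (X i ω : ℝ)} ≤
            ENNReal.ofReal (Real.exp (-t))) := by
  have hΓp0 : (0:ℝ) < Γp := lt_of_lt_of_le one_pos hΓp
  refine ⟨(Real.exp 1 * Γp / Γm) * Real.exp (Real.exp 1 * Γp * ρp / Γm), by positivity,
    fun φ hφ hR => Zexp_le hΓm hg0 hg hΓp hφ hR, ?_⟩
  intro φ hφ hR n Ω mΩ P hP X hX hindep hmap t ht
  set cE : ℝ := (Real.exp 1 * Γp / Γm) * Real.exp (Real.exp 1 * Γp * ρp / Γm) with hcE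
  have hZ := Z_pos hΓm hg0 hg hφ
  have hR0 := R_nonneg hΓm hg0 hg hφ
  set Y : Fin n → Ω → ℝ := fun i ω => ((X i ω : ℕ) : ℝ) with hY
  have hYmeas : ∀ i, Measurable (Y i) := fun i => measurable_from_top.comp (hX i)
  have hYindep : iIndepFun Y P :=
    hindep.comp (fun _ (k : ℕ) => (k : ℝ)) (fun _ => measurable_from_top)
  have hint : ∀ i, Integrable (fun ω => Real.exp (1 * Y i ω)) P := by
    intro i
    have h1 : Integrable (fun k : ℕ => Real.exp (1 * (k : ℝ))) (Measure.map (X i) P) := by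
      rw [hmap i]
      exact nu_integrable hΓm hg0 hg hφ (fun k => (Real.exp_pos _).le)
        (exp_summable hΓm hg0 hg hφ)
    have h2 := (integrable_map_measure measurable_from_top.aestronglyMeasurable
      (hX i).aemeasurable).mp h1
    exact h2
  have hmgf : ∀ i, mgf (Y i) P 1 = Zfun g (Real.exp 1 * φ) / Zfun g φ := by
    intro i
    calc mgf (Y i) P 1 = ∫ ω, Real.exp (1 * ((X i ω : ℕ) : ℝ)) ∂P := rfl
      _ = ∫ k, Real.exp (1 * (k : ℝ)) ∂(Measure.map (X i) P) :=
          (integral_map (f := fun k : ℕ => Real.exp (1 * (k:ℝ))) (hX i).aemeasurable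
            measurable_from_top.aestronglyMeasurable).symm
      _ = ∫ k, Real.exp (1 * (k : ℝ)) ∂(nuMeasure g φ) := by rw [hmap i]
      _ = Zfun g (Real.exp 1 * φ) / Zfun g φ := exp_nu_integral hΓm hg0 hg hφ
  have hSint : Integrable (fun ω => Real.exp (1 * (∑ i, Y i) ω)) P :=
    hYindep.integrable_exp_mul_sum hYmeas (fun i _ => hint i)
  have hmgfS : mgf (∑ i, Y i) P 1 = (Zfun g (Real.exp 1 * φ) / Zfun g φ) ^ n := by
    rw [hYindep.mgf_sum hYmeas]
    simp [hmgf, div_pow]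
  have hAeq : {ω | cE * Rfun g φ * n + t ≤ ∑ i, (X i ω : ℝ)}
      = {ω | cE * Rfun g φ * n + t ≤ (∑ i, Y i) ω} := by
    ext ω; simp [Finset.sum_apply, hY]
  rw [hAeq, ← ENNReal.ofReal_toReal (measure_ne_top P _)]
  apply ENNReal.ofReal_le_ofReal
  refine le_trans (measure_ge_le_exp_mul_mgf _ one_pos.le hSint) ?_
  rw [hmgfS]
  have hrle : Zfun g (Real.exp 1 * φ) / Zfun g φ ≤ Real.exp (cE * Rfun g φ) :=
    (div_le_iff₀ hZ).mpr (by
      rw [mul_comm (Real.exp (cE * Rfun g φ)) (Zfun g φ)]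
      exact Zexp_le hΓm hg0 hg hΓp hφ hR)
  have hr0 : 0 ≤ Zfun g (Real.exp 1 * φ) / Zfun g φ := by
    have h1 : 0 < Zfun g (Real.exp 1 * φ) :=
      Z_pos hΓm hg0 hg (by positivity)
    positivity
  calc Real.exp (-1 * (cE * Rfun g φ * n + t)) * (Zfun g (Real.exp 1 * φ) / Zfun g φ) ^ n
      ≤ Real.exp (-1 * (cE * Rfun g φ * n + t)) * Real.exp (cE * Rfun g φ) ^ n := by
        exact mul_le_mul_of_nonneg_left (pow_le_pow_left₀ hr0 hrle n) (Real.exp_pos _).le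
    _ = Real.exp (-1 * (cE * Rfun g φ * n + t) + n * (cE * Rfun g φ)) := by
        rw [← Real.exp_nat_mul, ← Real.exp_add]
    _ = Real.exp (-t) := by congr 1; ring
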